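/- For every integer d ≥ 2, the map π_c : SC_d(2,0;o) → S^{d-1} sending ((x,r),(y,s)) to (x − y)/‖x − y‖ is a well-defined continuous map and a homotopy equivalence; in particular the configuration space SC_d(2,0;o) of two nonoverlapping balls contained in the closed upper unit semiball of ℝ^d is homotopy equivalent to the sphere S^{d-1}. -/

import Mathlib

noncomputable section

/-- The configuration space `SC_d(2,0;o)` of two nonoverlapping balls in the closed
upper unit semiball of `ℝ^d`. -/
def SC20o (d : ℕ) (hd : 2 ≤ d) :
    Set ((EuclideanSpace ℝ (Fin d) × ℝ) × (EuclideanSpace ℝ (Fin d) × ℝ)) :=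
  {c | 0 < c.1.2 ∧ 0 < c.2.2 ∧
       c.1.1 ⟨d - 1, by omega⟩ ≥ c.1.2 ∧ c.2.1 ⟨d - 1, by omega⟩ ≥ c.2.2 ∧
       ‖c.1.1‖ + c.1.2 ≤ 1 ∧ ‖c.2.1‖ + c.2.2 ≤ 1 ∧
       ‖c.1.1 - c.2.1‖ ≥ c.1.2 + c.2.2}

/-- The unit sphere `S^{d-1} = {z ∈ ℝ^d : ‖z‖ = 1}`. -/
def unitSphere (d : ℕ) : Set (EuclideanSpace ℝ (Fin d)) := {z | ‖z‖ = 1}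

/-- The raw formula of the projection `π_c`, sending `((x,r),(y,s))` to `(x−y)/‖x−y‖`. -/
def rawPi (d : ℕ) :
    (EuclideanSpace ℝ (Fin d) × ℝ) × (EuclideanSpace ℝ (Fin d) × ℝ) →
      EuclideanSpace ℝ (Fin d) :=
  fun c => ‖c.1.1 - c.2.1‖⁻¹ • (c.1.1 - c.2.1)

namespace SCaux

/-- The ambient configuration type. -/
abbrev Conf (d : ℕ) := (EuclideanSpace ℝ (Fin d) × ℝ) × (EuclideanSpace ℝ (Fin d) × ℝ)

/-- coordinate bound -/
lemma abs_coord_le {d : ℕ} (z : EuclideanSpace ℝ (Fin d)) (i : Fin d) : |z i| ≤ ‖z‖ := by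
  have h := abs_real_inner_le_norm (EuclideanSpace.single i (1 : ℝ)) z
  rw [EuclideanSpace.inner_single_left, EuclideanSpace.norm_single] at h
  simpa using h

/-- The base point `(0,…,0,1/2)`. -/
def c0 (d : ℕ) (hd : 2 ≤ d) : EuclideanSpace ℝ (Fin d) :=
  EuclideanSpace.single ⟨d - 1, by omega⟩ ((1 : ℝ)/2)

lemma norm_c0 (d : ℕ) (hd : 2 ≤ d) : ‖c0 d hd‖ = 1/2 := by
  rw [c0, EuclideanSpace.norm_single]; norm_num

lemma c0_apply (d : ℕ) (hd : 2 ≤ d) : c0 d hd ⟨d - 1, by omega⟩ = 1/2 := by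
  rw [c0, EuclideanSpace.single_apply]; simp

/-- The section `σ` of `π`. -/
def sig (d : ℕ) (hd : 2 ≤ d) (z : EuclideanSpace ℝ (Fin d)) :
    (EuclideanSpace ℝ (Fin d) × ℝ) × (EuclideanSpace ℝ (Fin d) × ℝ) :=
  ((c0 d hd + ((1:ℝ)/8) • z, 1/8), (c0 d hd - ((1:ℝ)/8) • z, 1/8))

/-- The straight-line homotopy formula at time `t`, with `z` the normalized direction. -/
def Hpt (d : ℕ) (hd : 2 ≤ d) (t : ℝ)
    (c : (EuclideanSpace ℝ (Fin d) × ℝ) × (EuclideanSpace ℝ (Fin d) × ℝ))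
    (z : EuclideanSpace ℝ (Fin d)) :
    (EuclideanSpace ℝ (Fin d) × ℝ) × (EuclideanSpace ℝ (Fin d) × ℝ) :=
  (((1 - t) • c.1.1 + t • (c0 d hd + ((1:ℝ)/8) • z), (1 - t) * c.1.2 + t * (1/8)),
   ((1 - t) • c.2.1 + t • (c0 d hd - ((1:ℝ)/8) • z), (1 - t) * c.2.2 + t * (1/8)))

set_option maxHeartbeats 1000000 in
lemma Hpt_mem (d : ℕ) (hd : 2 ≤ d) (t : ℝ) (ht0 : 0 ≤ t) (ht1 : t ≤ 1)
    (c : (EuclideanSpace ℝ (Fin d) × ℝ) × (EuclideanSpace ℝ (Fin d) × ℝ))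
    (hc : c ∈ SC20o d hd) :
    Hpt d hd t c (‖c.1.1 - c.2.1‖⁻¹ • (c.1.1 - c.2.1)) ∈ SC20o d hd := by
  obtain ⟨hr, hs, hxd, hyd, hx1, hy1, hsep⟩ := hc
  simp only [Hpt, SC20o, Set.mem_setOf_eq]
  set x := c.1.1 with hx_def; set r := c.1.2 with hr_def
  set y := c.2.1 with hy_def; set s := c.2.2 with hs_def
  set n := ‖x - y‖ with hn_def
  have hn : 0 < n := lt_of_lt_of_le (by linarith) hsep
  set z : EuclideanSpace ℝ (Fin d) := n⁻¹ • (x - y) with hz_def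
  have hz : ‖z‖ = 1 := by
    rw [hz_def, norm_smul, norm_inv, norm_norm, ← hn_def, inv_mul_cancel₀ hn.ne']
  have hxy : x - y = n • z := by
    rw [hz_def, smul_smul, mul_inv_cancel₀ hn.ne', one_smul]
  clear_value x r y s n z
  have ht1' : (0:ℝ) ≤ 1 - t := by linarith
  have hzi : ∀ i, |z i| ≤ 1 := fun i => hz ▸ abs_coord_le z i
  have hnc0 := norm_c0 d hd
  have hca := c0_apply d hd
  refine ⟨?_, ?_, ?_, ?_, ?_, ?_, ?_⟩
  · nlinarith [mul_nonneg ht1' hr.le]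
  · nlinarith [mul_nonneg ht1' hs.le]
  · have hzi' := abs_le.1 (hzi ⟨d-1, by omega⟩)
    simp only [PiLp.add_apply, PiLp.smul_apply, smul_eq_mul, hca]
    have h1 : (1 - t) * r ≤ (1 - t) * x ⟨d-1, by omega⟩ :=
      mul_le_mul_of_nonneg_left hxd ht1'
    have h2 : t * (1/8 : ℝ) ≤ t * (1/2 + 1/8 * z ⟨d-1, by omega⟩) := by
      apply mul_le_mul_of_nonneg_left _ ht0; linarith [hzi'.1]
    linarith
  · have hzi' := abs_le.1 (hzi ⟨d-1, by omega⟩)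
    simp only [PiLp.add_apply, PiLp.sub_apply, PiLp.smul_apply, smul_eq_mul, hca]
    have h1 : (1 - t) * s ≤ (1 - t) * y ⟨d-1, by omega⟩ :=
      mul_le_mul_of_nonneg_left hyd ht1'
    have h2 : t * (1/8 : ℝ) ≤ t * (1/2 - 1/8 * z ⟨d-1, by omega⟩) := by
      apply mul_le_mul_of_nonneg_left _ ht0; linarith [hzi'.2]
    linarith
  · have h1 : ‖(1 - t) • x + t • (c0 d hd + ((1:ℝ)/8) • z)‖ ≤
        (1 - t) * ‖x‖ + t * (5/8) := by
      calc _ ≤ ‖(1 - t) • x‖ + ‖t • (c0 d hd + ((1:ℝ)/8) • z)‖ := norm_add_le _ _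
        _ ≤ (1 - t) * ‖x‖ + t * (5/8) := by
            rw [norm_smul, norm_smul, Real.norm_eq_abs, Real.norm_eq_abs,
              abs_of_nonneg ht1', abs_of_nonneg ht0]
            have : ‖c0 d hd + ((1:ℝ)/8) • z‖ ≤ 5/8 := by
              calc _ ≤ ‖c0 d hd‖ + ‖((1:ℝ)/8) • z‖ := norm_add_le _ _
                _ ≤ 5/8 := by rw [hnc0, norm_smul, hz]; norm_num
            linarith [mul_le_mul_of_nonneg_left this ht0]
    linarith [mul_le_mul_of_nonneg_left hx1 ht1']
  · have h1 : ‖(1 - t) • y + t • (c0 d hd - ((1:ℝ)/8) • z)‖ ≤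
        (1 - t) * ‖y‖ + t * (5/8) := by
      calc _ ≤ ‖(1 - t) • y‖ + ‖t • (c0 d hd - ((1:ℝ)/8) • z)‖ := norm_add_le _ _
        _ ≤ (1 - t) * ‖y‖ + t * (5/8) := by
            rw [norm_smul, norm_smul, Real.norm_eq_abs, Real.norm_eq_abs,
              abs_of_nonneg ht1', abs_of_nonneg ht0]
            have : ‖c0 d hd - ((1:ℝ)/8) • z‖ ≤ 5/8 := by
              calc _ ≤ ‖c0 d hd‖ + ‖((1:ℝ)/8) • z‖ := norm_sub_le _ _
                _ ≤ 5/8 := by rw [hnc0, norm_smul, hz]; norm_num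
            linarith [mul_le_mul_of_nonneg_left this ht0]
    linarith [mul_le_mul_of_nonneg_left hy1 ht1']
  · have hv : ((1 - t) • x + t • (c0 d hd + ((1:ℝ)/8) • z)) -
        ((1 - t) • y + t • (c0 d hd - ((1:ℝ)/8) • z)) =
        ((1 - t) * n + t * (1/4)) • z := by
      have step : (1 - t) • x + t • (c0 d hd + ((1:ℝ)/8) • z) -
          ((1 - t) • y + t • (c0 d hd - ((1:ℝ)/8) • z)) =
          (1 - t) • (x - y) + (t * (1/4)) • z := by module
      rw [step, hxy, smul_smul, ← add_smul]
    have hnn : (0:ℝ) ≤ (1 - t) * n + t * (1/4) := by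
      have h3 := mul_nonneg ht1' hn.le
      have h4 : (0:ℝ) ≤ t * (1/4) := by linarith [mul_nonneg ht0 (by norm_num : (0:ℝ) ≤ 1/4)]
      linarith
    rw [hv, norm_smul, hz, mul_one, Real.norm_eq_abs, abs_of_nonneg hnn]
    have := mul_le_mul_of_nonneg_left hsep ht1'
    linarith

lemma sig_mem (d : ℕ) (hd : 2 ≤ d) (z : EuclideanSpace ℝ (Fin d)) (hz : ‖z‖ = 1) :
    sig d hd z ∈ SC20o d hd := by
  have hzi : ∀ i, |z i| ≤ 1 := fun i => hz ▸ abs_coord_le z i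
  have hnc0 := norm_c0 d hd
  have hca := c0_apply d hd
  have hzi' := abs_le.1 (hzi ⟨d - 1, by omega⟩)
  simp only [sig, SC20o, Set.mem_setOf_eq]
  refine ⟨by norm_num, by norm_num, ?_, ?_, ?_, ?_, ?_⟩
  · simp only [PiLp.add_apply, PiLp.smul_apply, smul_eq_mul, hca]
    linarith
  · simp only [PiLp.sub_apply, PiLp.smul_apply, smul_eq_mul, hca]
    linarith
  · have h := norm_add_le (c0 d hd) (((1:ℝ)/8) • z)
    rw [hnc0, norm_smul, hz] at h
    simp only [Real.norm_eq_abs] at h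
    linarith [abs_nonneg ((1:ℝ)/8), (by norm_num : |(1:ℝ)/8| = 1/8)]
  · have h := norm_sub_le (c0 d hd) (((1:ℝ)/8) • z)
    rw [hnc0, norm_smul, hz] at h
    simp only [Real.norm_eq_abs] at h
    linarith [(by norm_num : |(1:ℝ)/8| = 1/8)]
  · have hv : (c0 d hd + ((1:ℝ)/8) • z) - (c0 d hd - ((1:ℝ)/8) • z) = ((1:ℝ)/4) • z := by
      module
    rw [hv, norm_smul, hz]
    norm_num

lemma mem_norm_sub_pos (d : ℕ) (hd : 2 ≤ d)
    {c : (EuclideanSpace ℝ (Fin d) × ℝ) × (EuclideanSpace ℝ (Fin d) × ℝ)}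
    (hc : c ∈ SC20o d hd) : 0 < ‖c.1.1 - c.2.1‖ := by
  obtain ⟨hr, hs, -, -, -, -, hsep⟩ := hc
  exact lt_of_lt_of_le (by linarith) hsep

lemma rawPi_mem (d : ℕ) (hd : 2 ≤ d)
    {c : (EuclideanSpace ℝ (Fin d) × ℝ) × (EuclideanSpace ℝ (Fin d) × ℝ)}
    (hc : c ∈ SC20o d hd) : rawPi d c ∈ unitSphere d := by
  have hn := mem_norm_sub_pos d hd hc
  show ‖_‖ = 1
  rw [rawPi, norm_smul, norm_inv, norm_norm, inv_mul_cancel₀ hn.ne']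

/-- The projection as a continuous map. -/
def piMap (d : ℕ) (hd : 2 ≤ d) : C(SC20o d hd, unitSphere d) where
  toFun c := ⟨rawPi d c.1, rawPi_mem d hd c.2⟩
  continuous_toFun := by
    apply Continuous.subtype_mk
    have h1 : Continuous fun c : SC20o d hd => ((c : Conf d).1.1 - (c : Conf d).2.1) := by
      fun_prop
    exact ((h1.norm).inv₀ fun c => (mem_norm_sub_pos d hd c.2).ne').smul h1

/-- The section as a continuous map. -/
def sigMap (d : ℕ) (hd : 2 ≤ d) : C(unitSphere d, SC20o d hd) where
  toFun z := ⟨sig d hd z, sig_mem d hd z z.2⟩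
  continuous_toFun := by
    apply Continuous.subtype_mk
    unfold sig
    fun_prop

/-- The deformation retraction. -/
def homot (d : ℕ) (hd : 2 ≤ d) :
    ContinuousMap.Homotopy (ContinuousMap.id (SC20o d hd))
      ((sigMap d hd).comp (piMap d hd)) where
  toFun p := ⟨Hpt d hd p.1 p.2 (rawPi d p.2.1),
    Hpt_mem d hd p.1 p.1.2.1 p.1.2.2 p.2.1 p.2.2⟩
  continuous_toFun := by
    apply Continuous.subtype_mk
    have hT : Continuous fun p : unitInterval × SC20o d hd => (p.1 : ℝ) := by fun_prop
    have h1 : Continuous fun p : unitInterval × SC20o d hd =>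
        ((p.2 : Conf d).1.1 - (p.2 : Conf d).2.1) := by fun_prop
    have hZ : Continuous fun p : unitInterval × SC20o d hd => rawPi d (p.2 : Conf d) :=
      ((h1.norm).inv₀ fun p => (mem_norm_sub_pos d hd p.2.2).ne').smul h1
    have hX : Continuous fun p : unitInterval × SC20o d hd => (p.2 : Conf d).1.1 := by
      fun_prop
    have hY : Continuous fun p : unitInterval × SC20o d hd => (p.2 : Conf d).2.1 := by
      fun_prop
    have hR : Continuous fun p : unitInterval × SC20o d hd => (p.2 : Conf d).1.2 := by
      fun_prop
    have hS : Continuous fun p : unitInterval × SC20o d hd => (p.2 : Conf d).2.2 := by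
      fun_prop
    unfold Hpt
    refine Continuous.prodMk (Continuous.prodMk ?_ ?_) (Continuous.prodMk ?_ ?_)
    · exact ((continuous_const.sub hT).smul hX).add
        (hT.smul (continuous_const.add (by fun_prop)))
    · exact ((continuous_const.sub hT).mul hR).add (hT.mul continuous_const)
    · exact ((continuous_const.sub hT).smul hY).add
        (hT.smul (continuous_const.sub (by fun_prop)))
    · exact ((continuous_const.sub hT).mul hS).add (hT.mul continuous_const)
  map_zero_left c := by
    apply Subtype.ext
    show Hpt d hd ((0 : unitInterval) : ℝ) (c : Conf d) _ = (c : Conf d)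
    simp only [Hpt, Set.Icc.coe_zero, sub_zero, one_smul, zero_smul, add_zero, one_mul,
      zero_mul]
  map_one_left c := by
    apply Subtype.ext
    show Hpt d hd ((1 : unitInterval) : ℝ) (c : Conf d) _ = sig d hd (rawPi d (c : Conf d))
    simp only [Hpt, sig, Set.Icc.coe_one, sub_self, zero_smul, one_smul, zero_add, one_mul,
      zero_mul, rawPi]

lemma pi_comp_sig (d : ℕ) (hd : 2 ≤ d) :
    (piMap d hd).comp (sigMap d hd) = ContinuousMap.id (unitSphere d) := by
  apply ContinuousMap.ext
  intro z
  apply Subtype.ext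
  show rawPi d (sig d hd (z : EuclideanSpace ℝ (Fin d))) = (z : EuclideanSpace ℝ (Fin d))
  have hz : ‖(z : EuclideanSpace ℝ (Fin d))‖ = 1 := z.2
  have hv : (c0 d hd + ((1:ℝ)/8) • (z : EuclideanSpace ℝ (Fin d))) -
      (c0 d hd - ((1:ℝ)/8) • (z : EuclideanSpace ℝ (Fin d))) =
      ((1:ℝ)/4) • (z : EuclideanSpace ℝ (Fin d)) := by module
  show ‖_‖⁻¹ • _ = _
  rw [show (sig d hd (z : EuclideanSpace ℝ (Fin d))).1.1 -
      (sig d hd (z : EuclideanSpace ℝ (Fin d))).2.1 =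
      ((1:ℝ)/4) • (z : EuclideanSpace ℝ (Fin d)) from hv]
  rw [norm_smul, hz, smul_smul]
  norm_num

end SCaux

theorem swissCheese_two_balls_open_homotopy_equiv_sphere (d : ℕ) (hd : 2 ≤ d) :
    (∀ c ∈ SC20o d hd, rawPi d c ∈ unitSphere d) ∧
    Continuous (fun c : SC20o d hd => rawPi d c.1) ∧
    (∃ h : ContinuousMap.HomotopyEquiv (SC20o d hd) (unitSphere d),
        ∀ c : SC20o d hd, (h.toFun c : EuclideanSpace ℝ (Fin d)) = rawPi d c.1) := by
  refine ⟨fun c hc => SCaux.rawPi_mem d hd hc, ?_, ?_⟩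
  · have h1 : Continuous fun c : SC20o d hd => ((c : SCaux.Conf d).1.1 - (c : SCaux.Conf d).2.1) := by
      fun_prop
    exact ((h1.norm).inv₀ fun c => (SCaux.mem_norm_sub_pos d hd c.2).ne').smul h1
  · refine ⟨⟨SCaux.piMap d hd, SCaux.sigMap d hd, ⟨(SCaux.homot d hd).symm⟩, ?_⟩,
      fun c => rfl⟩
    rw [SCaux.pi_comp_sig d hd]
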